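/- filterIFS completeness: For G = (V,E) valid and E_σ = filterIFS G M [] E (with E given as a list enumerating the edge set), no non-empty X ⊆ E \ E_σ can be added while preserving all IFS invariants: for all nonempty X ⊆ E \ E_σ, ¬ (∀ m ∈ getIFS M. m (α (V, E, E_σ ∪ X))). -/

import Mathlib

def backflows {α : Type*} (X : Set (α × α)) : Set (α × α) :=
  {e | (e.2, e.1) ∈ X}

def offending_flows {α : Type*} (m : Set α → Set (α × α) → Prop)
    (V : Set α) (E : Set (α × α)) : Set (Set (α × α)) :=
  {F | F ⊆ E ∧ ¬ m V E ∧ m V (E \ F) ∧ ∀ e ∈ F, ¬ m V ((E \ F) ∪ {e})}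

def get_offending_flows {α : Type*} (M : Set (Set α → Set (α × α) → Prop))
    (V : Set α) (E : Set (α × α)) : Set (Set (α × α)) :=
  ⋃ m ∈ M, offending_flows m V E

inductive Strategy : Type
  | IFS : Strategy
  | ACS : Strategy

structure SecurityInvariant (α : Type*) where
  pred : Set α → Set (α × α) → Prop
  strat : Strategy

/-- the predicates of the IFS-tagged invariants -/
def getIFS {α : Type*} (M : Set (SecurityInvariant α)) :
    Set (Set α → Set (α × α) → Prop) :=
  {f | ∃ m ∈ M, m.strat = Strategy.IFS ∧ f = m.pred}

/-- the predicates of the ACS-tagged invariants -/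
def getACS {α : Type*} (M : Set (SecurityInvariant α)) :
    Set (Set α → Set (α × α) → Prop) :=
  {f | ∃ m ∈ M, m.strat = Strategy.ACS ∧ f = m.pred}

open Classical in
/-- greedy IFS filter; list accumulators are read as sets via `{x | x ∈ ·}` -/
noncomputable def filterIFS {α : Type*} (V : Set α) (E : Set (α × α))
    (M : Set (SecurityInvariant α)) :
    List (α × α) → List (α × α) → List (α × α)
  | a, [] => a
  | a, e :: es =>
    if ∀ m ∈ getIFS M,
        m V (E ∪ {x | x ∈ e :: a} ∪ backflows {x | x ∈ e :: a})
    then filterIFS V E M (e :: a) es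
    else filterIFS V E M a es

open Classical in
/-- greedy ACS filter -/
noncomputable def filterACS {α : Type*} (V : Set α) (E : Set (α × α))
    (M : Set (SecurityInvariant α)) :
    List (α × α) → List (α × α) → List (α × α)
  | a, [] => a
  | a, e :: es =>
    if e ∉ backflows E ∧
        ∀ F ∈ get_offending_flows (getACS M) V
            (E ∪ {x | x ∈ e :: a} ∪ backflows {x | x ∈ e :: a}),
          F ⊆ backflows {x | x ∈ e :: a}
    then filterACS V E M (e :: a) es
    else filterACS V E M a es
lemma filterIFS_acc_sub {α : Type*} (V : Set α) (E : Set (α × α))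
    (M : Set (SecurityInvariant α)) :
    ∀ (l a : List (α × α)), ∀ x ∈ a, x ∈ filterIFS V E M a l := by
  intro l
  induction l with
  | nil => intro a x hx; simpa [filterIFS] using hx
  | cons e es ih =>
    intro a x hx
    rw [filterIFS]
    split
    · exact ih (e :: a) x (List.mem_cons_of_mem _ hx)
    · exact ih a x hx

lemma filterIFS_reject {α : Type*} (V : Set α) (E : Set (α × α))
    (M : Set (SecurityInvariant α)) :
    ∀ (l a : List (α × α)) (e : α × α), e ∈ l → e ∉ filterIFS V E M a l →
      ∃ a' : List (α × α), (∀ x ∈ a', x ∈ filterIFS V E M a l) ∧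
        ¬ (∀ m ∈ getIFS M,
            m V (E ∪ {x | x ∈ e :: a'} ∪ backflows {x | x ∈ e :: a'})) := by
  intro l
  induction l with
  | nil => intro a e he; simp at he
  | cons e' es ih =>
    intro a e he hne
    rw [filterIFS] at hne ⊢
    by_cases hc : ∀ m ∈ getIFS M,
        m V (E ∪ {x | x ∈ e' :: a} ∪ backflows {x | x ∈ e' :: a})
    · rw [if_pos hc] at hne ⊢
      rcases List.mem_cons.mp he with rfl | hes
      · exact absurd (filterIFS_acc_sub V E M es (e :: a) e List.mem_cons_self) hne
      · exact ih (e' :: a) e hes hne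
    · rw [if_neg hc] at hne ⊢
      rcases List.mem_cons.mp he with rfl | hes
      · exact ⟨a, fun x hx => filterIFS_acc_sub V E M es a x hx, hc⟩
      · exact ih a e hes hne

theorem stmt_11 {α : Type*} (M : Set (SecurityInvariant α))
    (V : Set α) (E : Set (α × α)) (L : List (α × α))
    (h_empty : ∀ m ∈ M, ∀ V' : Set α, m.pred V' ∅)
    (h_mono : ∀ m ∈ M, ∀ (V' : Set α) (E₁ E₂ : Set (α × α)),
        m.pred V' E₁ → E₂ ⊆ E₁ → m.pred V' E₂)
    (h_valid : ∀ m ∈ M, m.pred V E)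
    (hL : {x | x ∈ L} = E) :
    ∀ X ⊆ E \ {x | x ∈ filterIFS V E M [] L}, X ≠ ∅ →
      ¬ (∀ m ∈ getIFS M,
          m V (E ∪ ({x | x ∈ filterIFS V E M [] L} ∪ X) ∪
            backflows ({x | x ∈ filterIFS V E M [] L} ∪ X))) := by
  intro X hX hXne hall
  obtain ⟨e, heX⟩ := Set.nonempty_iff_ne_empty.mpr hXne
  have heE : e ∈ E := (hX heX).1
  have heL : e ∈ L := by rw [← hL] at heE; exact heE
  have hnot : e ∉ filterIFS V E M [] L := (hX heX).2
  obtain ⟨a', ha'sub, hfail⟩ := filterIFS_reject V E M L [] e heL hnot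
  apply hfail
  intro m hm
  obtain ⟨m₀, hm₀M, _, rfl⟩ := hm
  have hbig := hall m₀.pred ⟨m₀, hm₀M, by assumption, rfl⟩
  apply h_mono m₀ hm₀M V _ _ hbig
  have hsub : {x | x ∈ e :: a'} ⊆ {x | x ∈ filterIFS V E M [] L} ∪ X := by
    intro x hx
    rcases List.mem_cons.mp hx with rfl | hx'
    · exact Or.inr heX
    · exact Or.inl (ha'sub x hx')
  intro x hx
  rcases hx with (hx | hx) | hx
  · exact Or.inl (Or.inl hx)
  · exact Or.inl (Or.inr (hsub hx))
  · exact Or.inr (hsub hx)
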